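/- arXiv:1805.10070 — 3 statements merged into one kernel-verified Lean document; each statement's English description precedes it below -/
import Mathlib

section
/- Let P be an ordered set of strings. The map Dec_Pre is a bijection from Decomp_BWT(P) onto Prefix(←P.S), the set of all prefixes (including the empty string) of the reversed strings of P.S. -/
namespace BwtXbw

variable {α β : Type*}

/-- An ordered set of strings: a nonempty list of distinct nonempty strings over `α`
(the list order is the enumeration `t_1, …, t_n`). -/
structure OSS (α : Type*) where
  strs : List (List α)
  strs_ne : strs ≠ []
  nodup : strs.Nodup
  mem_ne : ∀ s ∈ strs, s ≠ []

/-- Embed a symbol of `α` into `WithBot α`; `⊥` plays the role of the separator `$`,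
which is smaller than every symbol of the alphabet. -/
def sym (a : α) : WithBot α := (a : WithBot α)

/-- The multi-string `m_P = t_1 $ t_2 $ ⋯ $ t_n $` over `WithBot α`. -/
def mP (P : OSS α) : List (WithBot α) :=
  (P.strs.map (fun s => s.map sym ++ [⊥])).flatten

/-- `SA` is a (0-based) suffix array for `m`: a bijection of `[0, |m|)` onto itself
listing the suffixes of `m` in increasing lexicographic order. -/
def IsSuffixArray [LinearOrder α] (m : List (WithBot α)) (SA : ℕ → ℕ) : Prop :=
  Set.BijOn SA (Set.Iio m.length) (Set.Iio m.length) ∧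
  ∀ i j : ℕ, i < j → j < m.length →
    List.Lex (· < ·) (m.drop (SA i)) (m.drop (SA j))

/-- `LRS(P)[i]` (0-based): number of symbols of `m` from position `SA i` up to (but not
including) the first separator at or after position `SA i`. -/
def lrs [LinearOrder α] (m : List (WithBot α)) (SA : ℕ → ℕ) (i : ℕ) : ℕ :=
  ((m.drop (SA i)).takeWhile (fun c => decide (c ≠ ⊥))).length

/-- Length of the longest common prefix of two lists. -/
def lcpLen [DecidableEq β] : List β → List β → ℕ
  | a :: s, b :: t => if a = b then lcpLen s t + 1 else 0
  | _, _ => 0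

/-- `LCP(P)[i] = min(LCP(m_P)[i], LRS(P)[i])` (0-based; `0` at `i = 0`). -/
def lcpP [LinearOrder α] (m : List (WithBot α)) (SA : ℕ → ℕ) (i : ℕ) : ℕ :=
  if i = 0 then 0
  else min (lcpLen (m.drop (SA (i - 1))) (m.drop (SA i))) (lrs m SA i)

/-- `Decomp_BWT(P)`: the maximal integer intervals `[u.1, u.2] ⊆ [0, |m|)` such that
`LCP(P)[k] = LRS(P)[k]` for every interior position `k ∈ [u.1+1, u.2]`. -/
def DecompBWT [LinearOrder α] (m : List (WithBot α)) (SA : ℕ → ℕ) : Set (ℕ × ℕ) :=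
  { u | u.1 ≤ u.2 ∧ u.2 < m.length ∧
        (∀ k, u.1 < k → k ≤ u.2 → lcpP m SA k = lrs m SA k) ∧
        (u.1 = 0 ∨ lcpP m SA u.1 ≠ lrs m SA u.1) ∧
        (u.2 + 1 = m.length ∨ lcpP m SA (u.2 + 1) ≠ lrs m SA (u.2 + 1)) }

/-- `Dec_Pre[u]`: the reverse of `m[SA u.1 .. SA u.1 + LRS[u.1] − 1]`. -/
def decPre [LinearOrder α] (m : List (WithBot α)) (SA : ℕ → ℕ) (u : ℕ × ℕ) :
    List (WithBot α) :=
  ((m.drop (SA u.1)).take (lrs m SA u.1)).reverse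

/-- `Prefix(←P.S)`: all prefixes (including the empty string) of the reversed strings of
`P.S`, viewed inside `WithBot α`. -/
def revPrefixes (P : OSS α) : Set (List (WithBot α)) :=
  { p | ∃ s ∈ P.strs, p <+: s.reverse.map sym }

/-- `Prefix(P.S)`: all prefixes (including the empty string) of the strings of `P.S`,
viewed inside `WithBot α`. -/
def fwdPrefixes (P : OSS α) : Set (List (WithBot α)) :=
  { p | ∃ s ∈ P.strs, p <+: s.map sym }

/-- `BWT(P)[i]` (0-based): `m[SA i − 1]` if `SA i > 0`, and the last symbol `$ = ⊥`
of `m` otherwise. -/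
def bwtArr (m : List (WithBot α)) (SA : ℕ → ℕ) (i : ℕ) : WithBot α :=
  if SA i = 0 then ⊥ else m.getD (SA i - 1) ⊥

/-- `C[c]`: the number of positions of `m` holding a symbol strictly smaller than `c`. -/
def Cfun [LinearOrder α] (m : List (WithBot α)) (c : WithBot α) : ℕ :=
  (m.filter (fun b => decide (b < c))).length

/-- The Last-to-First mapping (0-based):
`LF[i] = C[BWT[i]] + #{k < i : BWT[k] = BWT[i]}`. -/
def LF [LinearOrder α] (m : List (WithBot α)) (SA : ℕ → ℕ) (i : ℕ) : ℕ :=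
  Cfun m (bwtArr m SA i) +
    ((List.range i).filter (fun k => decide (bwtArr m SA k = bwtArr m SA i))).length

/-- The arc set `A_T(P)` on `Decomp_BWT(P)`. -/
def AT [LinearOrder α] (m : List (WithBot α)) (SA : ℕ → ℕ) :
    Set ((ℕ × ℕ) × (ℕ × ℕ)) :=
  { uv | uv.1 ∈ DecompBWT m SA ∧ uv.2 ∈ DecompBWT m SA ∧
      ∃ x, uv.1.1 ≤ x ∧ x ≤ uv.1.2 ∧ bwtArr m SA x ≠ ⊥ ∧
        uv.2.1 ≤ LF m SA x ∧ LF m SA x ≤ uv.2.2 }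

/-- Arc relation of the Aho–Corasick tree on the vertex set `Pref`:
`p` is the longest proper prefix of `q` belonging to `Pref`. -/
def ACTedge (Pref : Set (List β)) (p q : List β) : Prop :=
  p ∈ Pref ∧ q ∈ Pref ∧ p ≠ q ∧ p <+: q ∧
    ∀ r ∈ Pref, r ≠ q → r <+: q → r.length ≤ p.length

/-- `k` is a failure candidate for the position `i`: `k < i` and
`LRS[k] ≤ LCP[l]` for all `l ∈ [k+1, i]`. -/
def FailCand [LinearOrder α] (m : List (WithBot α)) (SA : ℕ → ℕ) (i k : ℕ) : Prop :=
  k < i ∧ ∀ l, k < l → l ≤ i → lrs m SA k ≤ lcpP m SA l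

/-- The arc set `A_F(P)` on `Decomp_BWT(P)`: the largest failure candidate for `u.1`
exists and lies in `v`. -/
def AF [LinearOrder α] (m : List (WithBot α)) (SA : ℕ → ℕ) :
    Set ((ℕ × ℕ) × (ℕ × ℕ)) :=
  { uv | uv.1 ∈ DecompBWT m SA ∧ uv.2 ∈ DecompBWT m SA ∧
      ∃ k, FailCand m SA uv.1.1 k ∧ (∀ k', FailCand m SA uv.1.1 k' → k' ≤ k) ∧
        uv.2.1 ≤ k ∧ k ≤ uv.2.2 }

/-- Arc relation of the Aho–Corasick failure-link graph on the vertex set `Pref`: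
`q` is the longest proper suffix of `p` belonging to `Pref`. -/
def ACFLedge (Pref : Set (List β)) (p q : List β) : Prop :=
  p ∈ Pref ∧ q ∈ Pref ∧ p ≠ q ∧ q <:+ p ∧
    ∀ r ∈ Pref, r ≠ p → r <:+ p → r.length ≤ q.length

/-- The Run-Length measure `d_B(P) = #{i : BWT[i] ≠ BWT[i+1]}` (0-based, `i` ranging
over the first `|m| − 1` positions). -/
def dB [LinearOrder α] (m : List (WithBot α)) (SA : ℕ → ℕ) : ℕ :=
  ((List.range (m.length - 1)).filter
      (fun i => decide (bwtArr m SA i ≠ bwtArr m SA (i + 1)))).length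

/-- `P` is topologically planar: for every prefix `p` of the reverse of some string of
`P.S`, the indices `r` with `p` a prefix of `reverse(t_r)` form a set of consecutive
integers. -/
def TopPlanar [DecidableEq α] (P : OSS α) : Prop :=
  ∀ p : List α, (∃ s ∈ P.strs, p <+: s.reverse) →
    ∀ r₁ r₂ r₃ : ℕ, r₁ ≤ r₂ → r₂ ≤ r₃ → r₃ < P.strs.length →
      p <+: (P.strs.getD r₁ []).reverse → p <+: (P.strs.getD r₃ []).reverse →
      p <+: (P.strs.getD r₂ []).reverse

/-- `Letter[i]`: the first symbol of the suffix of rank `i`, i.e. `m[SA i]`. -/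
def letterArr (m : List (WithBot α)) (SA : ℕ → ℕ) (i : ℕ) : WithBot α :=
  m.getD (SA i) ⊥

/-- 0-based select: the position of the `(j+1)`-st occurrence of `c` in
`f 0, f 1, …, f (N−1)`. -/
def select0 [LinearOrder α] (f : ℕ → WithBot α) (N : ℕ) (c : WithBot α) (j : ℕ) : ℕ :=
  (((List.range N).filter (fun k => decide (f k = c)))).getD j 0

/-- The inverse Last-to-First mapping (0-based):
`RLF[i] = select_{Letter[i]}(BWT, i − C[Letter[i]])`. -/
def RLF [LinearOrder α] (m : List (WithBot α)) (SA : ℕ → ℕ) (i : ℕ) : ℕ :=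
  select0 (bwtArr m SA) m.length (letterArr m SA i)
    (i - Cfun m (letterArr m SA i))

/-- `d_A(T') = #{i : T'[i] ≠ T'[i+1]}`, the number of adjacent mismatches. -/
def dA [DecidableEq β] : List β → ℕ
  | a :: b :: t => (if a = b then 0 else 1) + dA (b :: t)
  | _ => 0

/-- `T'` is valid for the block decomposition `B` (an interval partition given by the
lengths of the blocks): `T'` splits into blocks of the same lengths as those of `B`,
with the same symbol set blockwise. -/
def ValidArr [DecidableEq β] (B : List (List β)) (T' : List β) : Prop :=
  ∃ B' : List (List β),
    List.Forall₂ (fun b b' => b.length = b'.length ∧ b.toFinset = b'.toFinset) B B' ∧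
    B'.flatten = T'

/-- `T'` is optimal for the block decomposition `B`: valid and of minimal `d_A`. -/
def OptimalArr [DecidableEq β] (B : List (List β)) (T' : List β) : Prop :=
  ValidArr B T' ∧ ∀ T'' : List β, ValidArr B T'' → dA T' ≤ dA T''


section Aux
variable {γ : Type*}

variable {γ : Type*}

lemma lex_append [LinearOrder γ] (x : List γ) {l1 l2 : List γ}
    (h : List.Lex (· < ·) l1 l2) : List.Lex (· < ·) (x ++ l1) (x ++ l2) := by
  induction x with
  | nil => simpa
  | cons a x ih => exact List.Lex.cons ih

lemma lex_asymm [LinearOrder γ] {l1 l2 : List γ}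
    (h1 : List.Lex (· < ·) l1 l2) (h2 : List.Lex (· < ·) l2 l1) : False := by
  induction h1 with
  | nil => cases h2
  | rel h => cases h2 with
    | rel h' => exact absurd h (asymm h')
    | cons h' => exact lt_irrefl _ h
  | cons h ih => cases h2 with
    | rel h' => exact lt_irrefl _ h'
    | cons h' => exact ih h'

lemma prefix_of_between [LinearOrder γ] :
    ∀ (u l1 l2 l3 : List γ),
      (List.Lex (· < ·) l1 l2 ∨ l1 = l2) → (List.Lex (· < ·) l2 l3 ∨ l2 = l3) →
      u <+: l1 → u <+: l3 → u <+: l2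
  | [], _, _, _, _, _, _, _ => List.nil_prefix
  | a :: u, l1, l2, l3, h12, h23, h1, h3 => by
    rcases h12 with h12 | rfl
    · rcases h23 with h23 | rfl
      · obtain ⟨t1, rfl⟩ := h1
        obtain ⟨t3, rfl⟩ := h3
        rw [List.cons_append] at h12 h23
        cases h12 with
        | rel hab =>
          cases h23 with
          | rel hba => exact absurd hab (asymm hba)
          | cons h23' => exact absurd hab (lt_irrefl _)
        | cons h12' =>
          cases h23 with
          | rel hba => exact absurd hba (lt_irrefl _)
          | cons h23' =>
            exact List.cons_prefix_cons.mpr ⟨rfl,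
              prefix_of_between u _ _ _ (Or.inl h12') (Or.inl h23')
                (List.prefix_append u t1) (List.prefix_append u t3)⟩
      · exact h3
    · exact h1

lemma takeWhile_middle (p : γ → Bool) :
    ∀ (x : List γ) (b : γ) (y : List γ), (∀ a ∈ x, p a = true) → p b = false →
      ((x ++ b :: y).takeWhile p) = x
  | [], b, y, _, hb => by simp [List.takeWhile_cons, hb]
  | a :: x, b, y, hx, hb => by
    rw [List.cons_append, List.takeWhile_cons_of_pos (hx a (List.mem_cons_self)),
      takeWhile_middle p x b y (fun c hc => hx c (List.mem_cons_of_mem a hc)) hb]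

lemma prefix_takeWhile (p : γ → Bool) :
    ∀ (x l : List γ), x <+: l → (∀ a ∈ x, p a = true) → x <+: l.takeWhile p
  | [], _, _, _ => List.nil_prefix
  | a :: x, l, h, hx => by
    obtain ⟨t, rfl⟩ := h
    rw [List.cons_append, List.takeWhile_cons_of_pos (hx a (List.mem_cons_self))]
    exact List.cons_prefix_cons.mpr ⟨rfl,
      prefix_takeWhile p x _ (List.prefix_append x t)
        (fun c hc => hx c (List.mem_cons_of_mem a hc))⟩

lemma drop_flatten :
    ∀ (L : List (List γ)) (q : ℕ), q < L.flatten.length →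
      ∃ s ∈ L, ∃ j post, j < s.length ∧ L.flatten.drop q = s.drop j ++ post
  | [], q, h => by simp at h
  | s :: L, q, h => by
    by_cases hq : q < s.length
    · exact ⟨s, List.mem_cons_self, q, L.flatten, hq, by
        rw [List.flatten_cons, List.drop_append,
          Nat.sub_eq_zero_of_le (le_of_lt hq), List.drop_zero]⟩
    · push_neg at hq
      have h' : q - s.length < L.flatten.length := by
        rw [List.flatten_cons, List.length_append] at h; omega
      obtain ⟨s', hs', j, post, hj, hdrop⟩ := drop_flatten L (q - s.length) h'
      refine ⟨s', List.mem_cons_of_mem s hs', j, post, hj, ?_⟩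
      rw [List.flatten_cons, List.drop_append,
        List.drop_eq_nil_of_le hq, List.nil_append, hdrop]


variable {α : Type*}

lemma mP_struct [LinearOrder α] (P : OSS α) {q : ℕ} (hq : q < (mP P).length) :
    ∃ t ∈ P.strs, ∃ j r, (mP P).drop q = (t.map sym).drop j ++ ⊥ :: r ∧
      ((mP P).drop q).takeWhile (fun c => decide (c ≠ ⊥)) = (t.map sym).drop j := by
  obtain ⟨s, hs, j, post, hj, hdrop⟩ := drop_flatten _ q hq
  rw [List.mem_map] at hs
  obtain ⟨t, ht, rfl⟩ := hs
  replace hdrop : (mP P).drop q = (t.map sym ++ [⊥]).drop j ++ post := hdrop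
  have hj' : j ≤ (t.map sym).length := by
    simp only [List.length_append, List.length_map, List.length_cons,
      List.length_nil] at hj ⊢
    omega
  have hsplit : (t.map sym ++ [⊥]).drop j = (t.map sym).drop j ++ [⊥] := by
    rw [List.drop_append, Nat.sub_eq_zero_of_le hj', List.drop_zero]
  have hmem : ∀ a ∈ (t.map sym).drop j, (fun c : WithBot α => decide (c ≠ ⊥)) a = true := by
    intro a ha
    have : a ∈ t.map sym := (List.drop_suffix j _).subset ha
    obtain ⟨x, -, rfl⟩ := List.mem_map.mp this
    simp [sym]
  have hdrop' : (mP P).drop q = (t.map sym).drop j ++ ⊥ :: post := by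
    rw [hdrop, hsplit, List.append_assoc, List.singleton_append]
  refine ⟨t, ht, j, post, hdrop', ?_⟩
  rw [hdrop', takeWhile_middle _ _ _ _ hmem (by simp)]

lemma mP_bot [LinearOrder α] (P : OSS α) {q : ℕ} (hq : q < (mP P).length) :
    ∃ r, (mP P).drop q =
      ((mP P).drop q).takeWhile (fun c => decide (c ≠ ⊥)) ++ ⊥ :: r := by
  obtain ⟨t, -, j, r, h1, h2⟩ := mP_struct P hq
  refine ⟨r, ?_⟩
  rw [h2, ← h1]

lemma mP_prefix [LinearOrder α] (P : OSS α) {q : ℕ} (hq : q < (mP P).length) :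
    (((mP P).drop q).takeWhile (fun c => decide (c ≠ ⊥))).reverse ∈ revPrefixes P := by
  obtain ⟨t, ht, j, r, h1, h2⟩ := mP_struct P hq
  refine ⟨t, ht, ?_⟩
  rw [h2, List.map_reverse]
  exact List.reverse_prefix.mpr (List.drop_suffix j _)

lemma exists_pos [LinearOrder α] (P : OSS α) {p : List (WithBot α)}
    (hp : p ∈ revPrefixes P) :
    ∃ q, q < (mP P).length ∧
      ((mP P).drop q).takeWhile (fun c => decide (c ≠ ⊥)) = p.reverse := by
  obtain ⟨s, hs, hpre⟩ := hp
  have hpre' : p <+: (s.map sym).reverse := by rwa [List.map_reverse] at hpre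
  have hsuf : p.reverse <:+ s.map sym := by
    have := List.reverse_suffix.mpr hpre'
    rwa [List.reverse_reverse] at this
  obtain ⟨x, hx⟩ := hsuf
  obtain ⟨l, r0, hm⟩ := List.infix_of_mem_flatten
    (List.mem_map_of_mem (f := fun s : List α => s.map sym ++ [⊥]) hs)
  have hm2 : l ++ (s.map sym ++ [⊥]) ++ r0 = mP P := hm
  have hm' : mP P = (l ++ x) ++ (p.reverse ++ ⊥ :: r0) := by
    rw [← hm2, ← hx]
    simp [List.append_assoc]
  refine ⟨(l ++ x).length, ?_, ?_⟩
  · rw [hm']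
    simp only [List.length_append, List.length_cons]
    omega
  · rw [hm', List.drop_left]
    refine takeWhile_middle _ _ _ _ ?_ (by simp)
    intro a ha
    rw [List.mem_reverse] at ha
    obtain ⟨y, -, rfl⟩ := List.mem_map.mp (hpre.subset ha)
    simp [sym]


variable {α γ : Type*}

lemma lcpLen_append [DecidableEq γ] :
    ∀ (x l1 l2 : List γ), lcpLen (x ++ l1) (x ++ l2) = x.length + lcpLen l1 l2
  | [], l1, l2 => by simp
  | a :: x, l1, l2 => by
    show (if a = a then lcpLen (x ++ l1) (x ++ l2) + 1 else 0) = (a :: x).length + lcpLen l1 l2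
    rw [if_pos rfl, lcpLen_append x l1 l2, List.length_cons]
    omega

lemma take_eq_of_le_lcpLen [DecidableEq γ] :
    ∀ (n : ℕ) (l1 l2 : List γ), n ≤ lcpLen l1 l2 → l1.take n = l2.take n
  | 0, _, _, _ => by simp
  | n + 1, [], l2, h => by rw [show lcpLen ([] : List γ) l2 = 0 from rfl] at h; omega
  | n + 1, a :: s, [], h => by rw [show lcpLen (a :: s) ([] : List γ) = 0 from rfl] at h; omega
  | n + 1, a :: s, b :: t, h => by
    by_cases hab : a = b
    · subst hab
      have hred : lcpLen (a :: s) (a :: t) = lcpLen s t + 1 := by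
        show (if a = a then lcpLen s t + 1 else 0) = lcpLen s t + 1
        rw [if_pos rfl]
      rw [hred] at h
      simp only [List.take_succ_cons, take_eq_of_le_lcpLen n s t (by omega)]
    · have hred : lcpLen (a :: s) (b :: t) = 0 := by
        show (if a = b then lcpLen s t + 1 else 0) = 0
        rw [if_neg hab]
      omega

lemma lcp_iff [LinearOrder α] (P : OSS α) (SA : ℕ → ℕ)
    (hSA : IsSuffixArray (mP P) SA) {k : ℕ} (hk0 : 0 < k) (hk : k < (mP P).length) :
    lcpP (mP P) SA k = lrs (mP P) SA k ↔
      ((mP P).drop (SA (k - 1))).takeWhile (fun c => decide (c ≠ ⊥)) =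
        ((mP P).drop (SA k)).takeWhile (fun c => decide (c ≠ ⊥)) := by
  have hk1 : k - 1 < (mP P).length := by omega
  have hSAk : SA k < (mP P).length := hSA.1.mapsTo hk
  have hSAk1 : SA (k - 1) < (mP P).length := hSA.1.mapsTo hk1
  obtain ⟨r1, h1⟩ := mP_bot P hSAk1
  obtain ⟨r2, h2⟩ := mP_bot P hSAk
  set w1 := ((mP P).drop (SA (k - 1))).takeWhile (fun c => decide (c ≠ ⊥)) with hw1
  set w2 := ((mP P).drop (SA k)).takeWhile (fun c => decide (c ≠ ⊥)) with hw2
  have hlrs : lrs (mP P) SA k = w2.length := rfl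
  constructor
  · intro h
    unfold lcpP at h
    rw [if_neg (by omega)] at h
    have hle : lrs (mP P) SA k ≤
        lcpLen ((mP P).drop (SA (k - 1))) ((mP P).drop (SA k)) :=
      min_eq_right_iff.mp h
    have htake := take_eq_of_le_lcpLen w2.length _ _ (hlrs ▸ hle)
    have hw2p : w2 <+: (mP P).drop (SA k) := List.takeWhile_prefix _
    have hw2d1 : w2 <+: (mP P).drop (SA (k - 1)) := by
      rw [List.prefix_iff_eq_take, htake]
      exact List.prefix_iff_eq_take.mp hw2p
    have hw2w1 : w2 <+: w1 :=
      prefix_takeWhile _ w2 _ hw2d1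
        (fun a ha => by rw [hw2] at ha; exact List.mem_takeWhile_imp (p := fun c => decide (c ≠ ⊥)) ha)
    obtain ⟨t, ht⟩ := hw2w1
    cases t with
    | nil => rw [← ht, List.append_nil]
    | cons c t' =>
      exfalso
      have hc : c ≠ ⊥ := by
        have hcw : c ∈ w1 := by rw [← ht]; simp
        rw [hw1] at hcw
        have := List.mem_takeWhile_imp hcw
        simpa using this
      have hlex : List.Lex (· < ·) ((mP P).drop (SA k)) ((mP P).drop (SA (k - 1))) := by
        rw [h1, h2, ← ht, List.append_assoc, List.cons_append]
        exact lex_append w2 (List.Lex.rel (WithBot.bot_lt_iff_ne_bot.mpr hc))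
      exact lex_asymm (hSA.2 (k - 1) k (by omega) hk) hlex
  · intro h
    unfold lcpP
    rw [if_neg (by omega)]
    have hL : lcpLen ((mP P).drop (SA (k - 1))) ((mP P).drop (SA k))
        = w2.length + lcpLen (⊥ :: r1) (⊥ :: r2) := by
      rw [h1, h2, h]
      exact lcpLen_append w2 _ _
    have hc : lcpLen ((⊥ : WithBot α) :: r1) (⊥ :: r2) = lcpLen r1 r2 + 1 := by
      simp [lcpLen]
    rw [hlrs, hL]
    exact min_eq_right (by omega)

lemma takeWhile_eq_of_between [LinearOrder α] (P : OSS α) (SA : ℕ → ℕ)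
    (hSA : IsSuffixArray (mP P) SA) {i j k : ℕ} (hik : i ≤ k) (hkj : k ≤ j)
    (hj : j < (mP P).length)
    (hW : ((mP P).drop (SA i)).takeWhile (fun c => decide (c ≠ ⊥)) =
          ((mP P).drop (SA j)).takeWhile (fun c => decide (c ≠ ⊥))) :
    ((mP P).drop (SA k)).takeWhile (fun c => decide (c ≠ ⊥)) =
      ((mP P).drop (SA i)).takeWhile (fun c => decide (c ≠ ⊥)) := by
  have hi : i < (mP P).length := by omega
  have hk : k < (mP P).length := by omega
  have hSAi : SA i < (mP P).length := hSA.1.mapsTo hi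
  have hSAj : SA j < (mP P).length := hSA.1.mapsTo hj
  obtain ⟨r1, h1⟩ := mP_bot P hSAi
  obtain ⟨r3, h3⟩ := mP_bot P hSAj
  set w := ((mP P).drop (SA i)).takeWhile (fun c => decide (c ≠ ⊥)) with hwdef
  have hp1 : w ++ [⊥] <+: (mP P).drop (SA i) := ⟨r1, by rw [h1]; simp⟩
  have hp3 : w ++ [⊥] <+: (mP P).drop (SA j) := ⟨r3, by rw [h3, ← hW]; simp⟩
  have h12 : List.Lex (· < ·) ((mP P).drop (SA i)) ((mP P).drop (SA k)) ∨
      (mP P).drop (SA i) = (mP P).drop (SA k) := by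
    rcases eq_or_lt_of_le hik with rfl | hlt
    · exact Or.inr rfl
    · exact Or.inl (hSA.2 i k hlt hk)
  have h23 : List.Lex (· < ·) ((mP P).drop (SA k)) ((mP P).drop (SA j)) ∨
      (mP P).drop (SA k) = (mP P).drop (SA j) := by
    rcases eq_or_lt_of_le hkj with rfl | hlt
    · exact Or.inr rfl
    · exact Or.inl (hSA.2 k j hlt hj)
  obtain ⟨rest, hrest⟩ := prefix_of_between (w ++ [⊥]) _ _ _ h12 h23 hp1 hp3
  rw [← hrest, List.append_assoc, List.singleton_append]
  exact takeWhile_middle _ _ _ _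
    (fun a ha => by rw [hwdef] at ha; exact List.mem_takeWhile_imp (p := fun c => decide (c ≠ ⊥)) ha) (by simp)


end Aux

/-- `Dec_Pre` is a bijection from `Decomp_BWT(P)` onto
`Prefix(←P.S)`. -/
theorem decPre_bijOn [Fintype α] [LinearOrder α] (P : OSS α) (SA : ℕ → ℕ)
    (hSA : IsSuffixArray (mP P) SA) :
    Set.BijOn (decPre (mP P) SA) (DecompBWT (mP P) SA) (revPrefixes P) := by
  classical
  have hdec : ∀ u : ℕ × ℕ, decPre (mP P) SA u =
      (((mP P).drop (SA u.1)).takeWhile (fun c => decide (c ≠ ⊥))).reverse := by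
    intro u
    have h : ((mP P).drop (SA u.1)).takeWhile (fun c => decide (c ≠ ⊥)) =
        ((mP P).drop (SA u.1)).take (lrs (mP P) SA u.1) :=
      List.prefix_iff_eq_take.mp (List.takeWhile_prefix _)
    unfold decPre
    rw [← h]
  refine ⟨?_, ?_, ?_⟩
  · -- MapsTo
    intro u hu
    obtain ⟨h12, h2N, -, -, -⟩ := hu
    have hu1 : u.1 < (mP P).length := lt_of_le_of_lt h12 h2N
    rw [hdec u]
    exact mP_prefix P (hSA.1.mapsTo hu1)
  · -- InjOn
    have key : ∀ u v : ℕ × ℕ, u ∈ DecompBWT (mP P) SA → v ∈ DecompBWT (mP P) SA →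
        ((mP P).drop (SA u.1)).takeWhile (fun c => decide (c ≠ ⊥)) =
          ((mP P).drop (SA v.1)).takeWhile (fun c => decide (c ≠ ⊥)) →
        u.1 < v.1 → False := by
      intro u v hu hv hW hlt
      obtain ⟨hu12, hu2N, -, -, -⟩ := hu
      obtain ⟨hv12, hv2N, -, hvleft, -⟩ := hv
      have hv1N : v.1 < (mP P).length := lt_of_le_of_lt hv12 hv2N
      have h1 : ((mP P).drop (SA (v.1 - 1))).takeWhile (fun c => decide (c ≠ ⊥)) =
          ((mP P).drop (SA u.1)).takeWhile (fun c => decide (c ≠ ⊥)) :=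
        takeWhile_eq_of_between P SA hSA (by omega) (by omega) hv1N hW
      have hQ : lcpP (mP P) SA v.1 = lrs (mP P) SA v.1 :=
        (lcp_iff P SA hSA (by omega) hv1N).mpr (by rw [h1, hW])
      rcases hvleft with h0 | hne
      · omega
      · exact hne hQ
    intro u hu v hv he
    rw [hdec u, hdec v] at he
    have hW := List.reverse_injective he
    rcases lt_trichotomy u.1 v.1 with h | h | h
    · exact absurd (key u v hu hv hW h) not_false
    · have hle : ∀ a b : ℕ × ℕ, a ∈ DecompBWT (mP P) SA → b ∈ DecompBWT (mP P) SA →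
          a.1 = b.1 → a.2 ≤ b.2 := by
        intro a b ha hb hab
        by_contra hgt
        push_neg at hgt
        obtain ⟨ha12, ha2N, haint, -, -⟩ := ha
        obtain ⟨hb12, hb2N, -, -, hbright⟩ := hb
        have hQ := haint (b.2 + 1) (by omega) (by omega)
        rcases hbright with hN | hne
        · omega
        · exact hne hQ
      have h2 : u.2 = v.2 := le_antisymm (hle u v hu hv h) (hle v u hv hu h.symm)
      exact Prod.ext h h2
    · exact absurd (key v u hv hu hW.symm h) not_false
  · -- SurjOn
    intro p hp
    obtain ⟨q, hqN, hq⟩ := exists_pos P hp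
    obtain ⟨i, hiN, hSAi⟩ := hSA.1.surjOn hqN
    have hiN' : i < (mP P).length := hiN
    have hWi : ((mP P).drop (SA i)).takeWhile (fun c => decide (c ≠ ⊥)) = p.reverse := by
      rw [hSAi]; exact hq
    have haP : (Nat.findGreatest
        (fun x => x = 0 ∨ lcpP (mP P) SA x ≠ lrs (mP P) SA x) i) = 0 ∨
        lcpP (mP P) SA (Nat.findGreatest
          (fun x => x = 0 ∨ lcpP (mP P) SA x ≠ lrs (mP P) SA x) i) ≠
        lrs (mP P) SA (Nat.findGreatest
          (fun x => x = 0 ∨ lcpP (mP P) SA x ≠ lrs (mP P) SA x) i) :=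
      Nat.findGreatest_spec
        (P := fun x => x = 0 ∨ lcpP (mP P) SA x ≠ lrs (mP P) SA x)
        (Nat.zero_le i) (Or.inl rfl)
    set a := Nat.findGreatest
      (fun x => x = 0 ∨ lcpP (mP P) SA x ≠ lrs (mP P) SA x) i with hadef
    have hai : a ≤ i := Nat.findGreatest_le i
    have hmid1 : ∀ k, a < k → k ≤ i →
        lcpP (mP P) SA k = lrs (mP P) SA k ∧ k ≠ 0 := by
      intro k hk1 hk2
      have h := Nat.findGreatest_is_greatest (k := k)
        (P := fun x => x = 0 ∨ lcpP (mP P) SA x ≠ lrs (mP P) SA x) hk1 hk2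
      have h' : ¬(k = 0 ∨ lcpP (mP P) SA k ≠ lrs (mP P) SA k) := h
      push_neg at h'
      exact ⟨h'.2, h'.1⟩
    have hbex : ∃ b, i ≤ b ∧ (b + 1 = (mP P).length ∨
        lcpP (mP P) SA (b + 1) ≠ lrs (mP P) SA (b + 1)) :=
      ⟨(mP P).length - 1, by omega, Or.inl (by omega)⟩
    set b := Nat.find hbex with hbdef
    obtain ⟨hib, hbright⟩ := Nat.find_spec hbex
    have hbN : b < (mP P).length := by
      have : b ≤ (mP P).length - 1 :=
        Nat.find_min' hbex ⟨by omega, Or.inl (by omega)⟩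
      omega
    have hmid2 : ∀ k, i < k → k ≤ b → lcpP (mP P) SA k = lrs (mP P) SA k := by
      intro k hk1 hk2
      have h0 := Nat.find_min hbex (show k - 1 < b by omega)
      have h : ¬(i ≤ k - 1 ∧ (k - 1 + 1 = (mP P).length ∨
          lcpP (mP P) SA (k - 1 + 1) ≠ lrs (mP P) SA (k - 1 + 1))) := h0
      push_neg at h
      have h2 := (h (by omega)).2
      rw [show k - 1 + 1 = k by omega] at h2
      exact h2
    have hchain : ∀ n j, j + n = i → a ≤ j →
        ((mP P).drop (SA j)).takeWhile (fun c => decide (c ≠ ⊥)) =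
          ((mP P).drop (SA i)).takeWhile (fun c => decide (c ≠ ⊥)) := by
      intro n
      induction n with
      | zero => intro j hj _; rw [show j = i by omega]
      | succ n ih =>
        intro j hj haj
        have hstep := hmid1 (j + 1) (by omega) (by omega)
        have hC := (lcp_iff P SA hSA (by omega) (by omega)).mp hstep.1
        rw [show j + 1 - 1 = j from rfl] at hC
        rw [hC]
        exact ih (j + 1) (by omega) (by omega)
    refine ⟨(a, b), ⟨by omega, hbN, ?_, haP, hbright⟩, ?_⟩
    · intro k hk1 hk2
      rcases le_or_gt k i with hki | hki
      · exact (hmid1 k hk1 hki).1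
      · exact hmid2 k hki hk2
    · rw [hdec (a, b)]
      show (((mP P).drop (SA a)).takeWhile (fun c => decide (c ≠ ⊥))).reverse = p
      rw [hchain (i - a) a (by omega) le_rfl, hWi, List.reverse_reverse]

end BwtXbw
end

section
/- Let P be an ordered set of strings and let u = [i,j] ∈ Decomp_BWT(P). Then for every k ∈ [i,j], the reverse of the substring m_P[SA(m_P)[k] .. SA(m_P)[k]+LRS(P)[k]−1] equals Dec_Pre[u]; in particular LRS(P)[k] = LRS(P)[i] for all k ∈ [i,j]. -/
namespace BwtXbw

variable {α β : Type*}

lemma take_eq_of_le_lcpLen_s1 [DecidableEq β] :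
    ∀ (s t : List β) (L : ℕ), L ≤ lcpLen s t → s.take L = t.take L := by
  intro s
  induction s with
  | nil =>
    intro t L h
    cases t <;> simp [lcpLen] at h <;> simp [h]
  | cons a s ih =>
    intro t L h
    cases t with
    | nil => simp [lcpLen] at h; simp [h]
    | cons b t =>
      by_cases hab : a = b
      · subst hab
        have h' : L ≤ lcpLen s t + 1 := by simpa [lcpLen] using h
        cases L with
        | zero => simp
        | succ L =>
          simp only [List.take_succ_cons, List.cons.injEq, true_and]
          exact ih t L (by omega)
      · simp [lcpLen, hab] at h; simp [h]

lemma lcpLen_le_length_left [DecidableEq β] :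
    ∀ (s t : List β), lcpLen s t ≤ s.length := by
  intro s
  induction s with
  | nil => intro t; cases t <;> simp [lcpLen]
  | cons a s ih =>
    intro t
    cases t with
    | nil => simp [lcpLen]
    | cons b t =>
      by_cases hab : a = b <;> simp [lcpLen, hab]
      exact ih t

lemma lex_append_left {r : β → β → Prop} :
    ∀ (s t₁ t₂ : List β), List.Lex r t₁ t₂ → List.Lex r (s ++ t₁) (s ++ t₂) := by
  intro s
  induction s with
  | nil => intro t₁ t₂ h; simpa using h
  | cons a s ih => intro t₁ t₂ h; exact List.Lex.cons (ih t₁ t₂ h)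

lemma dropWhile_eq_drop (p : β → Bool) (l : List β) :
    l.dropWhile p = l.drop (l.takeWhile p).length := by
  induction l with
  | nil => simp
  | cons a t ih => by_cases h : p a <;> simp [List.dropWhile_cons, List.takeWhile_cons, h, ih]

/-- Key combinatorial step: comparing consecutive suffixes within a decomposition
interval. -/
lemma key_step [LinearOrder α] (l l' : List (WithBot α))
    (hb : ⊥ ∈ l) (hb' : ⊥ ∈ l')
    (hlex : List.Lex (· < ·) l' l)
    (hlcp : (l.takeWhile (fun c => decide (c ≠ ⊥))).length ≤ lcpLen l' l) :
    (l'.takeWhile (fun c => decide (c ≠ ⊥))).length =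
      (l.takeWhile (fun c => decide (c ≠ ⊥))).length ∧
    l'.take ((l'.takeWhile (fun c => decide (c ≠ ⊥))).length) =
      l.take ((l.takeWhile (fun c => decide (c ≠ ⊥))).length) := by
  set p : WithBot α → Bool := fun c => decide (c ≠ ⊥) with hp
  set L := (l.takeWhile p).length with hL
  set L' := (l'.takeWhile p).length with hL'
  have hlt : ∀ (w : List (WithBot α)), ⊥ ∈ w → (w.takeWhile p).length < w.length := by
    intro w hw
    have hpre : w.takeWhile p <+: w := List.takeWhile_prefix p
    rcases lt_or_eq_of_le hpre.length_le with h | h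
    · exact h
    · exfalso
      have heq : w.takeWhile p = w := hpre.eq_of_length h
      have := List.mem_takeWhile_imp (l := w) (p := p) (heq ▸ hw)
      simp [hp] at this
  have hgetbot : ∀ (w : List (WithBot α)) (hw : ⊥ ∈ w),
      w[(w.takeWhile p).length]'(hlt w hw) = ⊥ := by
    intro w hw
    have hne : w.dropWhile p ≠ [] := by
      rw [dropWhile_eq_drop]
      have := hlt w hw
      simp only [ne_eq, List.drop_eq_nil_iff]
      omega
    have hbot : (w.dropWhile p).head hne = ⊥ := by
      have := List.head_dropWhile_not p (l := w) hne
      simpa [hp] using this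
    have h1 : w[(w.takeWhile p).length + 0]? = some ⊥ := by
      rw [← List.getElem?_drop, ← dropWhile_eq_drop, ← List.head?_eq_getElem?,
        List.head?_eq_head hne]
      exact congrArg some hbot
    simp only [Nat.add_zero] at h1
    exact Option.some.inj ((List.getElem?_eq_getElem (hlt w hw)).symm.trans h1)
  have hgetne : ∀ (w : List (WithBot α)) (i : ℕ) (hi : i < (w.takeWhile p).length),
      w[i]'(lt_of_lt_of_le hi (List.takeWhile_prefix p).length_le) ≠ ⊥ := by
    intro w i hi hcontra
    have hpre : w.takeWhile p <+: w := List.takeWhile_prefix p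
    have hgeq := hpre.getElem hi
    have hmem : (w.takeWhile p)[i]'hi ∈ w.takeWhile p := List.getElem_mem _
    have := List.mem_takeWhile_imp hmem
    rw [hgeq, hcontra] at this
    simp [hp] at this
  have hLlen : L < l.length := hlt l hb
  have hL'len : L' < l'.length := hlt l' hb'
  have htake : l'.take L = l.take L := take_eq_of_le_lcpLen_s1 l' l L hlcp
  rcases lt_trichotomy L' L with h | h | h
  · -- L' < L : contradiction, l'[L'] = ⊥ but equals l[L'] ≠ ⊥
    exfalso
    have e1 : l'[L']? = l[L']? := by
      have := congrArg (fun t => t[L']?) htake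
      simpa [List.getElem?_take_of_lt h] using this
    have e2 : l'[L']? = some ⊥ := by
      rw [List.getElem?_eq_getElem hL'len]
      exact congrArg some (hgetbot l' hb')
    have e3 := hgetne l L' h
    have e4 : some (⊥ : WithBot α) =
        some (l[L']'(lt_of_lt_of_le h (List.takeWhile_prefix p).length_le)) := by
      rw [← e2, e1, List.getElem?_eq_getElem]
    exact e3 (Option.some.inj e4).symm
  · -- L' = L
    exact ⟨h, by rw [h]; exact htake⟩
  · -- L' > L : contradiction with lexicographic order
    exfalso
    have h1 : l[L]'hLlen = ⊥ := hgetbot l hb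
    have h2 := hgetne l' L h
    have hlex2 : List.Lex (· < ·) l l' := by
      conv_lhs => rw [← List.take_append_drop L l]
      conv_rhs => rw [← List.take_append_drop L l', htake]
      apply lex_append_left
      rw [List.drop_eq_getElem_cons hLlen,
        List.drop_eq_getElem_cons (lt_of_lt_of_le h (List.takeWhile_prefix p).length_le),
        h1]
      exact List.Lex.rel (by simpa [bot_lt_iff_ne_bot] using h2)
    exact (List.Lex.asymm (· < ·)).asymm _ _ hlex hlex2

lemma mP_eq_concat (P : OSS α) : ∃ w : List (WithBot α), mP P = w ++ [⊥] := by
  obtain ⟨w, a, h⟩ := (List.eq_nil_or_concat P.strs).resolve_left P.strs_ne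
  refine ⟨((w.map (fun s => s.map sym ++ [⊥])).flatten ++ a.map sym), ?_⟩
  simp [mP, h, List.flatten_append, List.append_assoc]

lemma bot_mem_drop (P : OSS α) {n : ℕ} (hn : n < (mP P).length) :
    (⊥ : WithBot α) ∈ (mP P).drop n := by
  obtain ⟨w, hw⟩ := mP_eq_concat P
  rw [hw] at hn ⊢
  simp only [List.length_append, List.length_singleton] at hn
  rw [List.drop_append_of_le_length (by omega)]
  simp

/-- On an interval `u = [i,j] ∈ Decomp_BWT(P)`, the reverse of
`m_P[SA[k] .. SA[k]+LRS[k]−1]` equals `Dec_Pre[u]` for every `k ∈ [i,j]`; in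
particular `LRS[k] = LRS[i]`. -/
theorem decPre_const_on_interval [Fintype α] [LinearOrder α] (P : OSS α)
    (SA : ℕ → ℕ) (hSA : IsSuffixArray (mP P) SA)
    (u : ℕ × ℕ) (hu : u ∈ DecompBWT (mP P) SA) :
    ∀ k, u.1 ≤ k → k ≤ u.2 →
      (((mP P).drop (SA k)).take (lrs (mP P) SA k)).reverse = decPre (mP P) SA u ∧
      lrs (mP P) SA k = lrs (mP P) SA u.1 := by
  set m := mP P with hm
  obtain ⟨hle, hlen, hint, _, _⟩ := hu
  have hmaps : ∀ n, n < m.length → SA n < m.length := fun n hn => hSA.1.1 hn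
  have H : ∀ k, u.1 ≤ k → k ≤ u.2 →
      lrs m SA k = lrs m SA u.1 ∧
      (m.drop (SA k)).take (lrs m SA k) = (m.drop (SA u.1)).take (lrs m SA u.1) := by
    intro k hk1
    induction k, hk1 using Nat.le_induction with
    | base => intro _; exact ⟨rfl, rfl⟩
    | succ k hk ih =>
      intro hk2
      have hk2' : k ≤ u.2 := by omega
      obtain ⟨ih1, ih2⟩ := ih hk2'
      have hSAk : SA k < m.length := hmaps k (by omega)
      have hSAk1 : SA (k + 1) < m.length := hmaps (k + 1) (by omega)
      have hb : (⊥ : WithBot α) ∈ m.drop (SA (k + 1)) := bot_mem_drop P hSAk1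
      have hb' : (⊥ : WithBot α) ∈ m.drop (SA k) := bot_mem_drop P hSAk
      have hlex : List.Lex (· < ·) (m.drop (SA k)) (m.drop (SA (k + 1))) :=
        hSA.2 k (k + 1) (by omega) (by omega)
      have hlcpk := hint (k + 1) (by omega) hk2
      have hlcp : lrs m SA (k + 1) ≤
          lcpLen (m.drop (SA k)) (m.drop (SA (k + 1))) := by
        rw [lcpP, if_neg (by omega)] at hlcpk
        simp only [Nat.add_sub_cancel] at hlcpk
        exact min_eq_right_iff.mp hlcpk
      have := key_step (m.drop (SA (k + 1))) (m.drop (SA k)) hb hb' hlex hlcp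
      simp only [lrs] at ih1 ih2 ⊢
      exact ⟨this.1.symm.trans ih1, this.2.symm.trans ih2⟩
  intro k hk1 hk2
  obtain ⟨h1, h2⟩ := H k hk1 hk2
  refine ⟨?_, h1⟩
  rw [decPre, h2]

end BwtXbw
end

section
/- Let P be an ordered set of strings, let u, v ∈ Decomp_BWT(P) and let x ∈ u be such that BWT(P)[x] ≠ $ and LF(P)[x] ∈ v. Then Dec_Pre[v] = Dec_Pre[u] extended by the single symbol BWT(P)[x], i.e. Dec_Pre[v] is the concatenation of Dec_Pre[u] with the one-symbol string BWT(P)[x]. -/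
namespace BwtXbw

variable {α β : Type*}

section Helpers

variable [LinearOrder α]

private lemma suf_lt_iff (m : List (WithBot α)) (SA : ℕ → ℕ) (hSA : IsSuffixArray m SA)
    {i j : ℕ} (hi : i < m.length) (hj : j < m.length) :
    i < j ↔ m.drop (SA i) < m.drop (SA j) := by
  constructor
  · exact fun h => hSA.2 i j h hj
  · intro h
    rcases lt_trichotomy i j with h' | h' | h'
    · exact h'
    · subst h'; exact absurd h (lt_irrefl _)
    · exact absurd (show m.drop (SA j) < m.drop (SA i) from hSA.2 j i h' hi) (lt_asymm h)

private lemma mP_end (P : OSS β) : ∃ m', mP P = m' ++ [(⊥ : WithBot β)] := by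
  rcases List.eq_nil_or_concat P.strs with h | ⟨l, t, h⟩
  · exact absurd h P.strs_ne
  · refine ⟨(l.map (fun s => s.map sym ++ [⊥])).flatten ++ t.map sym, ?_⟩
    simp [mP, h]

private lemma getD_last_bot (m : List (WithBot α))
    (hend : ∃ m', m = m' ++ [(⊥ : WithBot α)]) :
    m.getD (m.length - 1) ⊥ = ⊥ := by
  obtain ⟨m', rfl⟩ := hend
  rw [List.getD_eq_getElem _ _ (by simp)]
  rw [List.getElem_append_right (by simp)]
  simp

private lemma bot_mem_drop_s3 (m : List (WithBot α))
    (hend : ∃ m', m = m' ++ [(⊥ : WithBot α)]) {q : ℕ} (hq : q < m.length) :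
    (⊥ : WithBot α) ∈ m.drop q := by
  obtain ⟨m', rfl⟩ := hend
  have hq' : q ≤ m'.length := by simpa using Nat.lt_succ_iff.mp (by simpa using hq)
  rw [List.drop_append_of_le_length hq']
  simp

private lemma drop_cons (m : List (WithBot α)) {q : ℕ} (hq : q < m.length) :
    m.drop q = m.getD q ⊥ :: m.drop (q + 1) := by
  rw [List.getD_eq_getElem m ⊥ hq]; exact List.drop_eq_getElem_cons hq

private lemma lcpLen_spec {β : Type*} [DecidableEq β] (s : List β) :
    ∀ (t : List β) (n : ℕ), n ≤ lcpLen s t →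
      s.take n = t.take n ∧ n ≤ s.length ∧ n ≤ t.length := by
  induction s with
  | nil =>
    intro t n h
    have h0 : lcpLen ([] : List β) t = 0 := by cases t <;> rfl
    rw [h0, Nat.le_zero] at h
    subst h; simp
  | cons a s ih =>
    intro t n h
    cases t with
    | nil =>
      have h0 : lcpLen (a :: s) ([] : List β) = 0 := rfl
      rw [h0, Nat.le_zero] at h
      subst h; simp
    | cons b t =>
      cases n with
      | zero => simp
      | succ n =>
        have h0 : lcpLen (a :: s) (b :: t) = if a = b then lcpLen s t + 1 else 0 := rfl
        rw [h0] at h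
        by_cases hab : a = b
        · subst hab
          rw [if_pos rfl] at h
          obtain ⟨h1, h2, h3⟩ := ih t n (by omega)
          refine ⟨?_, by simpa using h2, by simpa using h3⟩
          simp [List.take_succ_cons, h1]
        · rw [if_neg hab] at h; omega

private lemma tw_decomp {s : List (WithBot α)} (hb : (⊥ : WithBot α) ∈ s) :
    ∃ t, s = s.takeWhile (fun c => decide (c ≠ ⊥)) ++ ((⊥ : WithBot α) :: t) := by
  have hsplit := List.takeWhile_append_dropWhile (p := fun c : WithBot α => decide (c ≠ ⊥)) (l := s)
  cases hd : s.dropWhile (fun c : WithBot α => decide (c ≠ ⊥)) with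
  | nil =>
    exfalso
    rw [hd, List.append_nil] at hsplit
    have := List.mem_takeWhile_imp (by rw [hsplit]; exact hb)
    simp at this
  | cons b t =>
    have hne : s.dropWhile (fun c : WithBot α => decide (c ≠ ⊥)) ≠ [] := by rw [hd]; simp
    have hb' := List.head_dropWhile_not (fun c : WithBot α => decide (c ≠ ⊥)) (l := s) hne
    simp only [hd, List.head_cons, decide_eq_false_iff_not, not_not] at hb'
    exact ⟨t, by conv_lhs => rw [← hsplit, hd, hb']⟩

private lemma tw_getElem_bot {s : List (WithBot α)} (hb : (⊥ : WithBot α) ∈ s) :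
    ∃ h : (s.takeWhile (fun c => decide (c ≠ ⊥))).length < s.length,
      s[(s.takeWhile (fun c => decide (c ≠ ⊥))).length]'h = ⊥ := by
  obtain ⟨t, ht⟩ := tw_decomp hb
  have hlen : (s.takeWhile (fun c => decide (c ≠ ⊥))).length < s.length := by
    conv_rhs => rw [ht]
    simp
  refine ⟨hlen, ?_⟩
  rw [List.getElem_of_eq ht hlen]
  rw [List.getElem_append_right (le_refl _)]
  simp

private lemma tw_getElem_ne {s : List (WithBot α)} {i : ℕ}
    (hi : i < (s.takeWhile (fun c => decide (c ≠ ⊥))).length) (h : i < s.length) :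
    s[i] ≠ ⊥ := by
  have hpre := List.takeWhile_prefix (l := s) (fun c : WithBot α => decide (c ≠ ⊥))
  have heq : (s.takeWhile (fun c => decide (c ≠ ⊥)))[i]'hi = s[i] := hpre.getElem hi
  have hmem : (s.takeWhile (fun c => decide (c ≠ ⊥)))[i]'hi ∈
      s.takeWhile (fun c => decide (c ≠ ⊥)) := List.getElem_mem _
  have := List.mem_takeWhile_imp hmem
  rw [heq] at this
  simpa using this

private lemma append_lt_append_iff (w : List (WithBot α)) {s t : List (WithBot α)} :
    w ++ s < w ++ t ↔ s < t := by
  induction w with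
  | nil => simp
  | cons a w ih =>
    constructor
    · intro h
      exact ih.mp (((List.cons_lex_cons_iff.mp (h : List.Lex (· < ·) (a :: (w ++ s)) (a :: (w ++ t)))).resolve_left (lt_irrefl _)).2)
    · intro h
      exact show List.Lex (· < ·) (a :: (w ++ s)) (a :: (w ++ t)) from
        List.Lex.cons (ih.mpr h)

private lemma getElem_bot_of_lt {s t : List (WithBot α)} {n : ℕ}
    (hst : s < t) (htake : s.take n = t.take n) (hns : n < s.length) (hnt : n < t.length)
    (ht : t[n] = ⊥) : s[n] = ⊥ := by
  have key : s.take n ++ s.drop n < t.take n ++ t.drop n := by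
    rw [List.take_append_drop, List.take_append_drop]; exact hst
  rw [htake] at key
  have hlt : s.drop n < t.drop n := (append_lt_append_iff _).mp key
  rw [List.drop_eq_getElem_cons hns, List.drop_eq_getElem_cons hnt] at hlt
  have := List.head_le_of_lt hlt
  rw [ht] at this
  exact le_bot_iff.mp this

end Helpers

section Block

variable [LinearOrder α]

private lemma tw_block (m : List (WithBot α)) (SA : ℕ → ℕ) (hSA : IsSuffixArray m SA)
    (hend : ∃ m', m = m' ++ [(⊥ : WithBot α)]) {a b : ℕ} (hbN : b < m.length)
    (hint : ∀ k, a < k → k ≤ b → lcpP m SA k = lrs m SA k) :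
    ∀ k, a ≤ k → k ≤ b →
      (m.drop (SA k)).takeWhile (fun c => decide (c ≠ ⊥)) =
      (m.drop (SA a)).takeWhile (fun c => decide (c ≠ ⊥)) := by
  intro k
  induction k with
  | zero =>
    intro h1 _
    have : a = 0 := by omega
    rw [this]
  | succ k ih =>
    intro h1 h2
    rcases Nat.lt_or_ge a (k + 1) with hak | hak
    · have ihk := ih (by omega) (by omega)
      rw [← ihk]
      -- core step : tw (k+1) = tw k
      have hcp := hint (k + 1) (by omega) h2
      rw [lcpP, if_neg (by omega : ¬ k + 1 = 0), Nat.add_sub_cancel, lrs] at hcp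
      set s := m.drop (SA k) with hs
      set t := m.drop (SA (k + 1)) with htdef
      set n := (t.takeWhile (fun c => decide (c ≠ ⊥))).length with hn
      have hnle : n ≤ lcpLen s t := min_eq_right_iff.mp hcp
      obtain ⟨hteq, hnls, hnlt⟩ := lcpLen_spec s t n hnle
      have hkN : k + 1 < m.length := by omega
      have hSAk : SA k < m.length := hSA.1.mapsTo (Set.mem_Iio.mpr (by omega))
      have hSAk1 : SA (k + 1) < m.length := hSA.1.mapsTo (Set.mem_Iio.mpr hkN)
      have hbs : (⊥ : WithBot α) ∈ s := bot_mem_drop_s3 m hend hSAk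
      have hbt : (⊥ : WithBot α) ∈ t := bot_mem_drop_s3 m hend hSAk1
      have hslt : s < t := hSA.2 k (k + 1) (by omega) hkN
      obtain ⟨hlt_t, hbot_t⟩ := tw_getElem_bot hbt
      obtain ⟨hlt_s, hbot_s⟩ := tw_getElem_bot hbs
      set n' := (s.takeWhile (fun c => decide (c ≠ ⊥))).length with hn'
      have htw_t : t.takeWhile (fun c => decide (c ≠ ⊥)) = t.take n :=
        (List.prefix_iff_eq_take.mp (List.takeWhile_prefix _))
      have htw_s : s.takeWhile (fun c => decide (c ≠ ⊥)) = s.take n' :=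
        (List.prefix_iff_eq_take.mp (List.takeWhile_prefix _))
      have hnn : n' = n := by
        rcases lt_trichotomy n' n with h | h | h
        · exfalso
          have hn's : n' < s.length := hlt_s
          have h1' : s[n']'hn's = (s.take n)[n']'(by
              rw [List.length_take]; omega) := (List.getElem_take).symm
          have h2' : (t.take n)[n']'(by rw [List.length_take]; omega) = t[n']'(by omega) :=
            List.getElem_take
          have hsn : s[n']'hn's = t[n']'(by omega) := by
            rw [h1', List.getElem_of_eq hteq (by rw [List.length_take]; omega), h2']
          have hne := tw_getElem_ne (i := n') (s := t) (by omega) (by omega)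
          rw [← hsn] at hne
          exact hne (hbot_s)
        · exact h
        · exfalso
          have hnsl : n < s.length := by omega
          have hntl : n < t.length := hlt_t
          have hsb : s[n]'hnsl = ⊥ :=
            getElem_bot_of_lt hslt hteq hnsl hntl hbot_t
          exact tw_getElem_ne (i := n) (s := s) (by omega) hnsl hsb
      rw [htw_t, htw_s, hnn, hteq]
    · have : a = k + 1 := by omega
      rw [this]

end Block

section LFsec

variable [LinearOrder α]

private lemma self_eq_map_range {β : Type*} (m : List β) (d : β) :
    m = (List.range m.length).map (fun q => m.getD q d) := by
  apply List.ext_getElem (by simp)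
  intro i h1 h2
  rw [List.getElem_map, List.getElem_range, List.getD_eq_getElem m d h1]

private lemma Cfun_card (m : List (WithBot α)) (c : WithBot α) :
    Cfun m c = ((Finset.range m.length).filter (fun q => m.getD q ⊥ < c)).card := by
  have hb : ((Finset.range m.length).filter (fun q => m.getD q ⊥ < c)).card
      = ((List.range m.length).filter (fun q => decide (m.getD q ⊥ < c))).length := rfl
  rw [Cfun, hb, ← List.countP_eq_length_filter, ← List.countP_eq_length_filter]
  conv_lhs => rw [self_eq_map_range m ⊥, List.countP_map]
  rfl

private lemma LF_spec (m : List (WithBot α)) (SA : ℕ → ℕ) (hSA : IsSuffixArray m SA)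
    (hend : ∃ m', m = m' ++ [(⊥ : WithBot α)]) {x : ℕ} (hx : x < m.length)
    (hbx : bwtArr m SA x ≠ ⊥) :
    LF m SA x < m.length ∧ SA (LF m SA x) = SA x - 1 := by
  have hmaps : ∀ {i : ℕ}, i < m.length → SA i < m.length :=
    fun hi => hSA.1.mapsTo (Set.mem_Iio.mpr hi)
  have hSAx : SA x < m.length := hmaps hx
  have hSAx0 : SA x ≠ 0 := by
    intro h0; exact hbx (by simp [bwtArr, h0])
  set N := m.length with hN
  set c := m.getD (SA x - 1) ⊥ with hc
  have hcb : bwtArr m SA x = c := by rw [bwtArr, if_neg hSAx0]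
  have hcbot : c ≠ ⊥ := hcb ▸ hbx
  have hginv : ∀ q, q < N → ∃ i, i < N ∧ SA i = q := by
    intro q hq
    obtain ⟨i, hi, hiq⟩ := hSA.1.surjOn (Set.mem_Iio.mpr hq)
    exact ⟨i, hi, hiq⟩
  choose! g hg1 hg2 using hginv
  set j := g (SA x - 1) with hj
  have hjN : j < N := hg1 _ (by omega)
  have hSAj : SA j = SA x - 1 := hg2 _ (by omega)
  have hsufj : m.drop (SA j) = c :: m.drop (SA x) := by
    rw [hSAj, drop_cons m (show SA x - 1 < m.length by omega),
      show SA x - 1 + 1 = SA x from by omega]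
  classical
  set A : Finset ℕ := (Finset.range N).filter (fun i => m.getD (SA i) ⊥ < c) with hA
  set B : Finset ℕ := (Finset.range N).filter (fun i => m.getD (SA i) ⊥ = c ∧ i < j) with hB
  have key : ∀ i, i < N → (i < j ↔ (m.getD (SA i) ⊥ < c ∨ (m.getD (SA i) ⊥ = c ∧ i < j))) := by
    intro i hiN
    constructor
    · intro hij
      have hlt : m.drop (SA i) < m.drop (SA j) := hSA.2 i j hij hjN
      rw [drop_cons m (hmaps hiN), hsufj] at hlt
      rcases lt_or_eq_of_le (List.head_le_of_lt hlt) with h | h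
      · exact Or.inl h
      · exact Or.inr ⟨h, hij⟩
    · rintro (h | ⟨-, h⟩)
      · have hlt : m.drop (SA i) < m.drop (SA j) := by
          rw [drop_cons m (hmaps hiN), hsufj]
          exact show List.Lex (· < ·) _ _ from List.Lex.rel h
        exact (suf_lt_iff m SA hSA hiN hjN).mpr hlt
      · exact h
  have hranges : Finset.range j = (Finset.range N).filter (fun i => i < j) := by
    ext i
    simp only [Finset.mem_range, Finset.mem_filter]
    omega
  have hsplit : (Finset.range N).filter (fun i => i < j) = A ∪ B := by
    ext i
    simp only [hA, hB, Finset.mem_filter, Finset.mem_union, Finset.mem_range]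
    constructor
    · rintro ⟨hiN, hij⟩
      rcases (key i hiN).mp hij with h | h
      · exact Or.inl ⟨hiN, h⟩
      · exact Or.inr ⟨hiN, h⟩
    · rintro (⟨hiN, h⟩ | ⟨hiN, h⟩)
      · exact ⟨hiN, (key i hiN).mpr (Or.inl h)⟩
      · exact ⟨hiN, (key i hiN).mpr (Or.inr h)⟩
  have hdisj : Disjoint A B := by
    rw [Finset.disjoint_left]
    intro i hiA hiB
    simp only [hA, hB, Finset.mem_filter] at hiA hiB
    exact absurd hiB.2.1 (ne_of_lt hiA.2)
  have hjcard : j = A.card + B.card := by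
    rw [← Finset.card_union_of_disjoint hdisj, ← hsplit, ← hranges, Finset.card_range]
  have hcardA : A.card = Cfun m c := by
    rw [Cfun_card]
    apply Finset.card_bij (fun a _ => SA a)
    · intro a ha
      simp only [hA, Finset.mem_filter, Finset.mem_range] at ha ⊢
      exact ⟨hmaps ha.1, ha.2⟩
    · intro a1 ha1 a2 ha2 heq
      simp only [hA, Finset.mem_filter, Finset.mem_range] at ha1 ha2
      exact hSA.1.injOn (Set.mem_Iio.mpr ha1.1) (Set.mem_Iio.mpr ha2.1) heq
    · intro q hq
      simp only [Finset.mem_filter, Finset.mem_range] at hq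
      refine ⟨g q, ?_, hg2 q hq.1⟩
      simp only [hA, Finset.mem_filter, Finset.mem_range]
      rw [hg2 q hq.1]
      exact ⟨hg1 q hq.1, hq.2⟩
  have hlastbot : m.getD (N - 1) ⊥ = ⊥ := getD_last_bot m hend
  have hcardB : ((Finset.range x).filter (fun k => m.getD (SA k - 1) ⊥ = c ∧ SA k ≠ 0)).card
      = B.card := by
    apply Finset.card_bij (fun k _ => g (SA k - 1))
    · intro k hk
      simp only [Finset.mem_filter, Finset.mem_range] at hk
      obtain ⟨hkx, hkc, hk0⟩ := hk
      have hkN : k < N := by omega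
      have hSAkN : SA k < N := hmaps hkN
      have hq : SA k - 1 < N := by omega
      simp only [hB, Finset.mem_filter, Finset.mem_range]
      refine ⟨hg1 _ hq, ?_, ?_⟩
      · rw [hg2 _ hq]; exact hkc
      · -- g (SA k - 1) < j
        have hsufk : m.drop (SA (g (SA k - 1))) = c :: m.drop (SA k) := by
          rw [hg2 _ hq, drop_cons m hq, show SA k - 1 + 1 = SA k from by omega, hkc]
        have hlt : m.drop (SA k) < m.drop (SA x) := hSA.2 k x hkx hx
        have : m.drop (SA (g (SA k - 1))) < m.drop (SA j) := by
          rw [hsufk, hsufj]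
          exact show List.Lex (· < ·) _ _ from List.Lex.cons hlt
        exact (suf_lt_iff m SA hSA (hg1 _ hq) hjN).mpr this
    · intro k1 hk1 k2 hk2 heq
      simp only [Finset.mem_filter, Finset.mem_range] at hk1 hk2
      have h1 : SA k1 - 1 < N := by have := hmaps (show k1 < N by omega); omega
      have h2 : SA k2 - 1 < N := by have := hmaps (show k2 < N by omega); omega
      have := congrArg SA heq
      rw [hg2 _ h1, hg2 _ h2] at this
      have hSAeq : SA k1 = SA k2 := by
        have e1 := hk1.2.2; have e2 := hk2.2.2
        omega
      exact hSA.1.injOn (Set.mem_Iio.mpr (by omega : k1 < N))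
        (Set.mem_Iio.mpr (by omega : k2 < N)) hSAeq
    · intro j' hj'
      simp only [hB, Finset.mem_filter, Finset.mem_range] at hj'
      obtain ⟨hj'N, hj'c, hj'j⟩ := hj'
      set q := SA j' with hqd
      have hqN : q < N := hmaps hj'N
      have hqne : q ≠ N - 1 := by
        intro h
        rw [hqd] at hj'c  -- no-op, keep
        apply hcbot
        rw [← hj'c, ← hqd, h, hlastbot]
      have hq1N : q + 1 < N := by omega
      set k := g (q + 1) with hk
      have hkN : k < N := hg1 _ hq1N
      have hSAk : SA k = q + 1 := hg2 _ hq1N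
      have hsufj' : m.drop (SA j') = c :: m.drop (SA k) := by
        rw [hSAk, ← hqd, drop_cons m hqN, hj'c]
      have hkx : k < x := by
        have hlt : m.drop (SA j') < m.drop (SA j) :=
          (suf_lt_iff m SA hSA hj'N hjN).mp hj'j
        rw [hsufj', hsufj] at hlt
        have : m.drop (SA k) < m.drop (SA x) :=
          ((List.cons_lex_cons_iff.mp (hlt : List.Lex (· < ·) _ _)).resolve_left (lt_irrefl _)).2
        exact (suf_lt_iff m SA hSA hkN hx).mpr this
      refine ⟨k, ?_, ?_⟩
      · simp only [Finset.mem_filter, Finset.mem_range]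
        refine ⟨hkx, ?_, by omega⟩
        rw [hSAk, Nat.add_sub_cancel]
        exact hj'c
      · -- g (SA k - 1) = j'
        have : SA k - 1 = q := by omega
        rw [this]
        have h1 : SA (g q) = q := hg2 _ (by omega)
        exact hSA.1.injOn (Set.mem_Iio.mpr (hg1 _ (by omega : q < N)))
          (Set.mem_Iio.mpr hj'N) (by rw [h1])
  have hfilter_eq : ((List.range x).filter
        (fun k => decide (bwtArr m SA k = bwtArr m SA x))).length
      = ((Finset.range x).filter (fun k => m.getD (SA k - 1) ⊥ = c ∧ SA k ≠ 0)).card := by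
    have hb : ((Finset.range x).filter (fun k => bwtArr m SA k = bwtArr m SA x)).card
        = ((List.range x).filter (fun k => decide (bwtArr m SA k = bwtArr m SA x))).length :=
      rfl
    rw [← hb]
    apply Finset.card_bij (fun k _ => k)  -- same underlying set
    · intro k hk
      simp only [Finset.mem_filter, Finset.mem_range] at hk ⊢
      refine ⟨hk.1, ?_, ?_⟩
      · have := hk.2
        rw [hcb, bwtArr] at this
        by_cases h0 : SA k = 0
        · rw [if_pos h0] at this; exact absurd this.symm hcbot
        · rwa [if_neg h0] at this
      · intro h0
        have := hk.2
        rw [hcb, bwtArr, if_pos h0] at this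
        exact hcbot this.symm
    · intro k1 k2 _ _ h; exact h
    · intro k hk
      simp only [Finset.mem_filter, Finset.mem_range] at hk ⊢
      refine ⟨k, ⟨hk.1, ?_⟩, rfl⟩
      rw [hcb, bwtArr, if_neg hk.2.2]
      exact hk.2.1
  have hLFj : LF m SA x = j := by
    rw [LF, hfilter_eq, hcardB, hcb, ← hcardA]
    exact hjcard.symm
  rw [hLFj]
  exact ⟨hjN, hSAj⟩

end LFsec

/-- If `x ∈ u` satisfies `BWT(P)[x] ≠ $` and `LF(P)[x] ∈ v`, then
`Dec_Pre[v] = Dec_Pre[u] ++ [BWT(P)[x]]`. -/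
theorem decPre_extend [Fintype α] [LinearOrder α] (P : OSS α) (SA : ℕ → ℕ)
    (hSA : IsSuffixArray (mP P) SA)
    (u v : ℕ × ℕ) (hu : u ∈ DecompBWT (mP P) SA) (hv : v ∈ DecompBWT (mP P) SA)
    (x : ℕ) (hx₁ : u.1 ≤ x) (hx₂ : x ≤ u.2) (hb : bwtArr (mP P) SA x ≠ ⊥)
    (hl₁ : v.1 ≤ LF (mP P) SA x) (hl₂ : LF (mP P) SA x ≤ v.2) :
    decPre (mP P) SA v = decPre (mP P) SA u ++ [bwtArr (mP P) SA x] := by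
  have hend := mP_end P
  set m := mP P with hm
  have hu2N : u.2 < m.length := hu.2.1
  have hv2N : v.2 < m.length := hv.2.1
  have hxN : x < m.length := lt_of_le_of_lt hx₂ hu2N
  obtain ⟨hLFN, hSALF⟩ := LF_spec m SA hSA hend hxN hb
  have hdePu : decPre m SA u
      = ((m.drop (SA u.1)).takeWhile (fun c => decide (c ≠ ⊥))).reverse := by
    rw [decPre]
    congr 1
    rw [lrs]
    exact (List.prefix_iff_eq_take.mp (List.takeWhile_prefix _)).symm
  have hdePv : decPre m SA v
      = ((m.drop (SA v.1)).takeWhile (fun c => decide (c ≠ ⊥))).reverse := by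
    rw [decPre]
    congr 1
    rw [lrs]
    exact (List.prefix_iff_eq_take.mp (List.takeWhile_prefix _)).symm
  have hbu : (m.drop (SA x)).takeWhile (fun c => decide (c ≠ ⊥))
      = (m.drop (SA u.1)).takeWhile (fun c => decide (c ≠ ⊥)) :=
    tw_block m SA hSA hend hu2N hu.2.2.1 x hx₁ hx₂
  have hbv : (m.drop (SA (LF m SA x))).takeWhile (fun c => decide (c ≠ ⊥))
      = (m.drop (SA v.1)).takeWhile (fun c => decide (c ≠ ⊥)) :=
    tw_block m SA hSA hend hv2N hv.2.2.1 (LF m SA x) hl₁ hl₂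
  have hSAx : SA x < m.length := hSA.1.mapsTo (Set.mem_Iio.mpr hxN)
  have hSAx0 : SA x ≠ 0 := fun h0 => hb (by simp [bwtArr, h0])
  have hbw : bwtArr m SA x = m.getD (SA x - 1) ⊥ := by rw [bwtArr, if_neg hSAx0]
  have hstep : m.drop (SA (LF m SA x)) = bwtArr m SA x :: m.drop (SA x) := by
    rw [hSALF, drop_cons m (show SA x - 1 < m.length by omega),
      show SA x - 1 + 1 = SA x from by omega, ← hbw]
  have htw : (m.drop (SA (LF m SA x))).takeWhile (fun c => decide (c ≠ ⊥))
      = bwtArr m SA x :: (m.drop (SA x)).takeWhile (fun c => decide (c ≠ ⊥)) := by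
    rw [hstep, List.takeWhile_cons_of_pos (by simpa using hb)]
  rw [hdePv, hdePu, ← hbv, htw, List.reverse_cons, hbu]

end BwtXbw
end
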